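/- Let k be an algebraically closed field of characteristic zero, let p be a prime number, and let Ǧ be a subgroup of GL₃(k) isomorphic to μ_p × μ_p which contains no non-trivial scalar matrix. Then there exists an element g ∈ Ǧ which is not a scalar matrix and which has an eigenvalue λ ∈ k whose eigenspace {v ∈ k³ : g·v = λ·v} has dimension 2. (Geometrically: the image of g in PGL₃(k) acts on ℙ² with fixed locus a line together with a unique isolated point.) -/

import Mathlib

open Polynomial

private lemma aux_mvl_inj {k : Type} [Field k] : Function.Injective
    (Matrix.mulVecLin : Matrix (Fin 3) (Fin 3) k → Module.End k (Fin 3 → k)) := by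
  intro A B h
  rw [← Matrix.toLin'_apply', ← Matrix.toLin'_apply'] at h
  exact Matrix.toLin'.injective h

private lemma aux_mvl_smul {k : Type} [Field k] (c : k) (A : Matrix (Fin 3) (Fin 3) k) :
    (c • A).mulVecLin = c • A.mulVecLin := by
  ext v
  simp [Matrix.mulVecLin_apply, Matrix.smul_mulVec]

private lemma aux_end_scalar_of_matrix {k : Type} [Field k] {M : Matrix (Fin 3) (Fin 3) k}
    {c : k} (h : M.mulVecLin = (c • 1 : Module.End k (Fin 3 → k))) : M = c • 1 := by
  apply aux_mvl_inj
  rw [h, aux_mvl_smul, Matrix.mulVecLin_one]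
  rfl

private lemma aux_pow_eigen {k : Type} [Field k] (S : Module.End k (Fin 3 → k))
    (v : Fin 3 → k) (c : k) (h : S v = c • v) (n : ℕ) : (S ^ n) v = c ^ n • v := by
  induction n with
  | zero => simp
  | succ n ih =>
      rw [pow_succ, pow_succ, Module.End.mul_apply, h, map_smul, ih, smul_smul,
        mul_comm]

private lemma aux_two_mem {α : Type*} (s : Multiset α) (h2 : 2 ≤ s.card) (hnd : s.Nodup) :
    ∃ a b, a ∈ s ∧ b ∈ s ∧ a ≠ b := by
  obtain ⟨a, ha⟩ := Multiset.exists_mem_of_ne_zero (s := s)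
    (by intro h; rw [h] at h2; simp at h2)
  obtain ⟨t, rfl⟩ := Multiset.exists_cons_of_mem ha
  obtain ⟨b, hb⟩ := Multiset.exists_mem_of_ne_zero (s := t)
    (by intro ht; rw [ht] at h2; simp at h2)
  have hnd' := Multiset.nodup_cons.mp hnd
  exact ⟨a, b, ha, Multiset.mem_cons_of_mem hb, fun h => hnd'.1 (h ▸ hb)⟩

/-- Let `k` be an algebraically closed field of characteristic zero, let `p` be a prime
number, and let `Ǧ` be a subgroup of `GL₃(k)` isomorphic to `μ_p × μ_p` which contains no
non-trivial scalar matrix. Then there exists an element `g ∈ Ǧ` which is not a scalar matrix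
and which has an eigenvalue `λ ∈ k` whose eigenspace has dimension `2`. (Geometrically: the
image of `g` in `PGL₃(k)` acts on `ℙ²` with fixed locus a line together with a unique
isolated point.) -/
theorem stmt_13 (k : Type) [Field k] [IsAlgClosed k] [CharZero k]
    (p : ℕ) (hp : p.Prime) (G : Subgroup (GL (Fin 3) k))
    (hiso : Nonempty (G ≃* Multiplicative (ZMod p × ZMod p)))
    (hscal : ∀ g ∈ G, (∃ c : k, ((g : GL (Fin 3) k) : Matrix (Fin 3) (Fin 3) k) =
      c • (1 : Matrix (Fin 3) (Fin 3) k)) → g = 1) :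
    ∃ g ∈ G,
      (¬ ∃ c : k, ((g : GL (Fin 3) k) : Matrix (Fin 3) (Fin 3) k) =
        c • (1 : Matrix (Fin 3) (Fin 3) k)) ∧
      ∃ lam : k, Module.finrank k
        (Module.End.eigenspace
          (Matrix.mulVecLin ((g : GL (Fin 3) k) : Matrix (Fin 3) (Fin 3) k)) lam) = 2 := by
  classical
  have hfact : Fact p.Prime := ⟨hp⟩
  by_contra hcon
  obtain ⟨f⟩ := hiso
  have hfin : Finite G := Finite.of_equiv _ f.toEquiv.symm
  have hcard : Nat.card G = p * p := by
    rw [Nat.card_congr f.toEquiv]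
    simp [Nat.card_eq_fintype_card, ZMod.card]
  have hpow : ∀ x : G, x ^ p = 1 := by
    intro x
    apply f.injective
    rw [map_pow, map_one]
    have hz : (p : ZMod p) = 0 := ZMod.natCast_self p
    apply Multiplicative.toAdd.injective
    show p • (Multiplicative.toAdd (f x)) = 0
    ext <;> simp [nsmul_eq_mul, hz]
  have hcomm : ∀ x y : G, x * y = y * x := by
    intro x y
    apply f.injective
    rw [map_mul, map_mul, mul_comm]
  -- the representation as endomorphisms
  set τ : G → Module.End k (Fin 3 → k) :=
    fun h => Matrix.mulVecLin ((h : GL (Fin 3) k) : Matrix (Fin 3) (Fin 3) k) with hτ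
  have hτmul : ∀ x y : G, τ (x * y) = τ x * τ y := by
    intro x y
    show Matrix.mulVecLin _ = _
    rw [Subgroup.coe_mul, Units.val_mul, Matrix.mulVecLin_mul]
    rfl
  have hτone : τ 1 = 1 := by
    show Matrix.mulVecLin _ = _
    rw [OneMemClass.coe_one, Units.val_one, Matrix.mulVecLin_one]
    rfl
  have hτpow : ∀ (x : G) (n : ℕ), τ (x ^ n) = τ x ^ n := by
    intro x n
    induction n with
    | zero => simpa using hτone
    | succ n ih => rw [pow_succ, pow_succ, hτmul, ih]
  -- scalars give trivial elements
  have hscal' : ∀ (x : G) (c : k), τ x = (c • 1 : Module.End k (Fin 3 → k)) → x = 1 := by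
    intro x c h
    have hm : ((x : GL (Fin 3) k) : Matrix (Fin 3) (Fin 3) k) = c • 1 :=
      aux_end_scalar_of_matrix h
    exact OneMemClass.coe_eq_one.mp (hscal _ x.2 ⟨c, hm⟩)
  have hns : ∀ x : G, x ≠ 1 →
      ¬∃ c : k, ((x : GL (Fin 3) k) : Matrix (Fin 3) (Fin 3) k) =
        c • (1 : Matrix (Fin 3) (Fin 3) k) := by
    rintro x hx ⟨c, hc⟩
    exact hx (OneMemClass.coe_eq_one.mp (hscal _ x.2 ⟨c, hc⟩))
  -- all eigenspaces of nontrivial elements have dimension at most 1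
  have hle1 : ∀ (x : G), x ≠ 1 → ∀ lam : k,
      Module.finrank k (Module.End.eigenspace (τ x) lam) ≤ 1 := by
    intro x hx lam
    set E := Module.End.eigenspace (τ x) lam with hE
    have h3 : Module.finrank k E ≤ 3 := by
      simpa [Module.finrank_fin_fun] using Submodule.finrank_le E
    have hne2 : Module.finrank k E ≠ 2 := by
      intro h
      exact hcon ⟨x, x.2, hns x hx, lam, h⟩
    have hne3 : Module.finrank k E ≠ 3 := by
      intro h
      have htop : E = ⊤ := Submodule.eq_top_of_finrank_eq (by
        rw [h, Module.finrank_fin_fun])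
      have hsc : τ x = (lam • 1 : Module.End k (Fin 3 → k)) := by
        refine LinearMap.ext fun v => ?_
        have hv : v ∈ Module.End.eigenspace (τ x) lam := by
          rw [← hE, htop]; trivial
        have := Module.End.mem_eigenspace_iff.mp hv
        simpa using this
      exact hx (hscal' x lam hsc)
    omega
  -- pick a nontrivial element g₀
  have h1lt : 1 < Nat.card G := by rw [hcard]; nlinarith [hp.two_le]
  have : Nontrivial G := Finite.one_lt_card_iff_nontrivial.mp h1lt
  obtain ⟨g₀, hg₀⟩ := exists_ne (1 : G)
  set T : Module.End k (Fin 3 → k) := τ g₀ with hT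
  have hTp : T ^ p = 1 := by rw [hT, ← hτpow, hpow, hτone]
  have hint : IsIntegral k T := Algebra.IsIntegral.isIntegral T
  have haeval : (Polynomial.aeval T) ((X : k[X]) ^ p - C 1) = 0 := by
    simp [map_pow, hTp]
  have hdvd : minpoly k T ∣ (X : k[X]) ^ p - C 1 := minpoly.dvd k T haeval
  have hsep : ((X : k[X]) ^ p - C 1).Separable :=
    Polynomial.separable_X_pow_sub_C 1 (by exact_mod_cast hp.ne_zero) one_ne_zero
  have hmsep : (minpoly k T).Separable := hsep.of_dvd hdvd
  have hnodup : (minpoly k T).roots.Nodup := Polynomial.nodup_roots hmsep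
  have hsplit : (minpoly k T).Splits := IsAlgClosed.splits _
  have hdegeq : (minpoly k T).roots.card = (minpoly k T).natDegree :=
    (Polynomial.splits_iff_card_roots).mp hsplit
  have hdeg1 : 1 ≤ (minpoly k T).natDegree := minpoly.natDegree_pos hint
  -- the minimal polynomial has degree at least 2 (otherwise g₀ is scalar)
  have hdeg2 : 2 ≤ (minpoly k T).roots.card := by
    by_contra hlt
    push_neg at hlt
    have hnd : (minpoly k T).natDegree = 1 := by omega
    have hm : (minpoly k T).Monic := minpoly.monic hint
    set c : k := (minpoly k T).coeff 0 with hc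
    have heq : minpoly k T = X + C c := hm.eq_X_add_C hnd
    have h0 := minpoly.aeval k T
    rw [heq] at h0
    simp only [map_add, aeval_X, aeval_C, Module.algebraMap_end_eq_smul_id] at h0
    have h1 : T = -(c • LinearMap.id) := eq_neg_of_add_eq_zero_left h0
    have hsc : τ g₀ = ((-c) • 1 : Module.End k (Fin 3 → k)) := by
      rw [← hT, h1]
      ext v
      simp
    exact hg₀ (hscal' g₀ (-c) hsc)
  -- two distinct eigenvalues
  obtain ⟨l₁, l₂, hl₁, hl₂, hl12⟩ := aux_two_mem _ hdeg2 hnodup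
  have hmne : minpoly k T ≠ 0 := minpoly.ne_zero hint
  have hev₁ : T.HasEigenvalue l₁ :=
    Module.End.hasEigenvalue_of_isRoot ((Polynomial.mem_roots hmne).mp hl₁)
  have hev₂ : T.HasEigenvalue l₂ :=
    Module.End.hasEigenvalue_of_isRoot ((Polynomial.mem_roots hmne).mp hl₂)
  obtain ⟨v₁, hv₁m, hv₁0⟩ := hev₁.exists_hasEigenvector
  obtain ⟨v₂, hv₂m, hv₂0⟩ := hev₂.exists_hasEigenvector
  have hv₁e : T v₁ = l₁ • v₁ := Module.End.mem_eigenspace_iff.mp hv₁m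
  have hv₂e : T v₂ = l₂ • v₂ := Module.End.mem_eigenspace_iff.mp hv₂m
  -- the eigenspaces are spanned by v₁, v₂
  have hspan₁ : Module.End.eigenspace T l₁ = Submodule.span k {v₁} := by
    refine (Submodule.eq_of_le_of_finrank_le ?_ ?_).symm
    · rwa [Submodule.span_singleton_le_iff_mem]
    · rw [finrank_span_singleton hv₁0]
      exact hle1 g₀ hg₀ l₁
  have hspan₂ : Module.End.eigenspace T l₂ = Submodule.span k {v₂} := by
    refine (Submodule.eq_of_le_of_finrank_le ?_ ?_).symm
    · rwa [Submodule.span_singleton_le_iff_mem]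
    · rw [finrank_span_singleton hv₂0]
      exact hle1 g₀ hg₀ l₂
  -- v₁ and v₂ are linearly independent
  have hli : LinearIndependent k ![v₁, v₂] := by
    rw [LinearIndependent.pair_iff]
    intro s t hst
    have e2 : (s * l₁) • v₁ + (t * l₂) • v₂ = 0 := by
      have := congrArg T hst
      simpa [map_add, map_smul, hv₁e, hv₂e, smul_smul] using this
    have e3 : (t * (l₂ - l₁)) • v₂ = 0 := by
      have hmod : (t * (l₂ - l₁)) • v₂ =
          ((s * l₁) • v₁ + (t * l₂) • v₂) - l₁ • (s • v₁ + t • v₂) := by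
        module
      rw [hmod, e2, hst, smul_zero, sub_zero]
    have ht : t = 0 := by
      rcases smul_eq_zero.mp e3 with h | h
      · rcases mul_eq_zero.mp h with h' | h'
        · exact h'
        · exact absurd (sub_eq_zero.mp h') (Ne.symm hl12)
      · exact absurd h hv₂0
    refine ⟨?_, ht⟩
    rw [ht, zero_smul, add_zero] at hst
    rcases smul_eq_zero.mp hst with h | h
    · exact h
    · exact absurd h hv₁0
  -- the key step: equal action on v₁ and v₂ forces triviality
  have key2 : ∀ (x : G) (a : k), τ x v₁ = a • v₁ → τ x v₂ = a • v₂ → x = 1 := by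
    intro x a h1 h2
    by_contra hx
    have hspan : Submodule.span k (Set.range ![v₁, v₂]) ≤
        Module.End.eigenspace (τ x) a := by
      rw [Submodule.span_le]
      rintro w ⟨i, rfl⟩
      fin_cases i
      · rw [SetLike.mem_coe, Module.End.mem_eigenspace_iff]; exact h1
      · rw [SetLike.mem_coe, Module.End.mem_eigenspace_iff]; exact h2
    have hfr : Module.finrank k (Submodule.span k (Set.range ![v₁, v₂])) = 2 := by
      rw [finrank_span_eq_card hli]
      simp
    have h2le : 2 ≤ Module.finrank k (Module.End.eigenspace (τ x) a) := by
      rw [← hfr]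
      exact Submodule.finrank_mono hspan
    have := hle1 x hx a
    omega
  -- each element of G acts on v₁ and v₂ by scalars
  have hact₁ : ∀ h : G, ∃ c : k, τ h v₁ = c • v₁ := by
    intro h
    have hmem : τ h v₁ ∈ Module.End.eigenspace T l₁ := by
      rw [Module.End.mem_eigenspace_iff]
      have : T (τ h v₁) = τ h (T v₁) := by
        rw [hT, ← Module.End.mul_apply, ← Module.End.mul_apply, ← hτmul, ← hτmul,
          hcomm g₀ h]
      rw [this, hv₁e, map_smul]
    rw [hspan₁] at hmem
    obtain ⟨a, ha⟩ := Submodule.mem_span_singleton.mp hmem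
    exact ⟨a, ha.symm⟩
  have hact₂ : ∀ h : G, ∃ c : k, τ h v₂ = c • v₂ := by
    intro h
    have hmem : τ h v₂ ∈ Module.End.eigenspace T l₂ := by
      rw [Module.End.mem_eigenspace_iff]
      have : T (τ h v₂) = τ h (T v₂) := by
        rw [hT, ← Module.End.mul_apply, ← Module.End.mul_apply, ← hτmul, ← hτmul,
          hcomm g₀ h]
      rw [this, hv₂e, map_smul]
    rw [hspan₂] at hmem
    obtain ⟨a, ha⟩ := Submodule.mem_span_singleton.mp hmem
    exact ⟨a, ha.symm⟩
  choose c₁ hc₁ using hact₁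
  choose c₂ hc₂ using hact₂
  -- the scalars are p-th roots of unity
  have hroot : ∀ (h : G) (c : k) (v : Fin 3 → k), v ≠ 0 → τ h v = c • v → c ^ p = 1 := by
    intro h c v hv0 hcv
    have h1 : (τ h ^ p) v = c ^ p • v := aux_pow_eigen _ _ _ hcv p
    rw [← hτpow, hpow, hτone] at h1
    have h2 : (c ^ p - 1) • v = 0 := by
      rw [sub_smul, one_smul, ← h1]
      simp
    rcases smul_eq_zero.mp h2 with h3 | h3
    · exact sub_eq_zero.mp h3
    · exact absurd h3 hv0
  have hc₁p : ∀ h : G, (c₁ h) ^ p = 1 := fun h => hroot h _ v₁ hv₁0 (hc₁ h)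
  have hc₂p : ∀ h : G, (c₂ h) ^ p = 1 := fun h => hroot h _ v₂ hv₂0 (hc₂ h)
  have hc₁0 : ∀ h : G, c₁ h ≠ 0 := by
    intro h h0
    have := hc₁p h
    rw [h0, zero_pow hp.ne_zero] at this
    exact zero_ne_one this
  have hc₂0 : ∀ h : G, c₂ h ≠ 0 := by
    intro h h0
    have := hc₂p h
    rw [h0, zero_pow hp.ne_zero] at this
    exact zero_ne_one this
  -- the ratio map is injective into p-th roots of unity
  set Φ : G → k := fun h => c₁ h * (c₂ h)⁻¹ with hΦdef
  have hinv₁ : ∀ h : G, τ h⁻¹ v₁ = (c₁ h)⁻¹ • v₁ := by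
    intro h
    have h1 : τ h⁻¹ (τ h v₁) = v₁ := by
      rw [← Module.End.mul_apply, ← hτmul, inv_mul_cancel, hτone]
      rfl
    rw [hc₁ h, map_smul] at h1
    have h2 := congrArg (fun w => (c₁ h)⁻¹ • w) h1
    simp only [smul_smul, inv_mul_cancel₀ (hc₁0 h), one_smul] at h2
    exact h2
  have hinv₂ : ∀ h : G, τ h⁻¹ v₂ = (c₂ h)⁻¹ • v₂ := by
    intro h
    have h1 : τ h⁻¹ (τ h v₂) = v₂ := by
      rw [← Module.End.mul_apply, ← hτmul, inv_mul_cancel, hτone]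
      rfl
    rw [hc₂ h, map_smul] at h1
    have h2 := congrArg (fun w => (c₂ h)⁻¹ • w) h1
    simp only [smul_smul, inv_mul_cancel₀ (hc₂0 h), one_smul] at h2
    exact h2
  have hinj : Function.Injective Φ := by
    intro h h' hΦ
    have hx₁ : τ (h * h'⁻¹) v₁ = (c₁ h * (c₁ h')⁻¹) • v₁ := by
      rw [hτmul, Module.End.mul_apply, hinv₁, map_smul, hc₁, smul_smul, mul_comm]
    have hx₂ : τ (h * h'⁻¹) v₂ = (c₁ h * (c₁ h')⁻¹) • v₂ := by
      have hr : c₁ h * (c₁ h')⁻¹ = c₂ h * (c₂ h')⁻¹ := by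
        have hΦ' : c₁ h * (c₂ h)⁻¹ = c₁ h' * (c₂ h')⁻¹ := hΦ
        rw [← div_eq_mul_inv, ← div_eq_mul_inv, div_eq_div_iff (hc₁0 h') (hc₂0 h')]
        rw [← div_eq_mul_inv, ← div_eq_mul_inv, div_eq_div_iff (hc₂0 h) (hc₂0 h')] at hΦ'
        linear_combination hΦ'
      rw [hr, hτmul, Module.End.mul_apply, hinv₂, map_smul, hc₂, smul_smul, mul_comm]
    have := key2 _ _ hx₁ hx₂
    exact mul_inv_eq_one.mp this
  have hmemR : ∀ h : G, Φ h ∈ Polynomial.nthRootsFinset p (1 : k) := by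
    intro h
    rw [Polynomial.mem_nthRootsFinset hp.pos]
    rw [hΦdef]
    simp only [mul_pow, inv_pow, hc₁p h, hc₂p h]
    simp
  -- cardinality contradiction
  set R := Polynomial.nthRootsFinset p (1 : k) with hR
  have hinj' : Function.Injective (fun h : G => (⟨Φ h, hmemR h⟩ : {x // x ∈ R})) := by
    intro a b hab
    exact hinj (Subtype.mk_eq_mk.mp hab)
  have hcard2 : Nat.card G ≤ Nat.card {x // x ∈ R} :=
    Nat.card_le_card_of_injective _ hinj'
  have hcardR : Nat.card {x // x ∈ R} = R.card := by
    rw [Nat.card_eq_fintype_card, Fintype.card_coe]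
  have hRle : R.card ≤ p := by
    rw [hR]
    exact le_trans (Multiset.toFinset_card_le _) (Polynomial.card_nthRoots p 1)
  have hfinal : p * p ≤ p := by
    rw [← hcard]
    rw [hcardR] at hcard2
    exact le_trans hcard2 hRle
  have h2p : 2 * p ≤ p * p := Nat.mul_le_mul_right p hp.two_le
  have := hp.two_le
  omega
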